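/- There exists a four-player partnership domino game ending blocked in which the winning team scores exactly 107 points. -/

import Mathlib

/-- A domino tile is an unordered pair of values in `{0,…,6}`. -/
abbrev Tile := Sym2 (Fin 7)

/-- The pip sum of the tile `[a,b]` is `a + b`. -/
def pips (t : Tile) : ℕ :=
  Sym2.lift ⟨fun (a b : Fin 7) => (a : ℕ) + (b : ℕ), fun a b => Nat.add_comm a b⟩ t

/-- The board: the chain of already played tiles, as a list of oriented tiles
concatenated left to right (consecutive tiles match end to end). -/
abbrev Board := List (Fin 7 × Fin 7)

/-- The total pip sum of the tiles on a board. -/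
def boardPips (b : Board) : ℕ := (b.map fun p => (p.1 : ℕ) + (p.2 : ℕ)).sum

/-- A tile `t` can extend a (nonempty) board `b` when `t` contains one of the two
open ends of `b`. -/
def canExtend (b : Board) (t : Tile) : Prop :=
  b ≠ [] ∧ (b.head!.1 ∈ t ∨ b.getLast!.2 ∈ t)

/-- The total pip sum of a hand of tiles. -/
def handPips (h : Finset Tile) : ℕ := ∑ t ∈ h, pips t

/-- A game state: the board of already played tiles, the four remaining hands, and
whose turn it is. -/
structure GState where
  board : Board
  hands : Fin 4 → Finset Tile
  turn : Fin 4

/-- Players `0` and `2` form team `false`; players `1` and `3` form team `true`. -/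
def playerTeam (i : Fin 4) : Bool := decide ((i : ℕ) % 2 = 1)

/-- The total pip sum remaining in the hands of the two players of a team. -/
def GState.teamPips (s : GState) (tm : Bool) : ℕ :=
  if tm then handPips (s.hands 1) + handPips (s.hands 3)
  else handPips (s.hands 0) + handPips (s.hands 2)

/-- A single legal move of the game (the game is still running, i.e. all hands are
nonempty).  The player to move either plays a tile from their hand — the first tile
played starts the chain, and every later tile is appended, suitably oriented, to one
of the two open ends of the chain — or passes, which is permitted only if no tile
remaining in their hand contains either open end of the chain. -/
inductive Step : GState → GState → Prop
  | playFirst (s : GState) (p : Fin 7 × Fin 7)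
      (hrun : ∀ i, s.hands i ≠ ∅)
      (hb : s.board = [])
      (ht : Sym2.mk p.1 p.2 ∈ s.hands s.turn) :
      Step s ⟨[p],
        Function.update s.hands s.turn ((s.hands s.turn).erase (Sym2.mk p.1 p.2)),
        s.turn + 1⟩
  | playLeft (s : GState) (p : Fin 7 × Fin 7)
      (hrun : ∀ i, s.hands i ≠ ∅)
      (hb : s.board ≠ [])
      (ht : Sym2.mk p.1 p.2 ∈ s.hands s.turn)
      (hfit : p.2 = s.board.head!.1) :
      Step s ⟨p :: s.board,
        Function.update s.hands s.turn ((s.hands s.turn).erase (Sym2.mk p.1 p.2)),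
        s.turn + 1⟩
  | playRight (s : GState) (p : Fin 7 × Fin 7)
      (hrun : ∀ i, s.hands i ≠ ∅)
      (hb : s.board ≠ [])
      (ht : Sym2.mk p.1 p.2 ∈ s.hands s.turn)
      (hfit : p.1 = s.board.getLast!.2) :
      Step s ⟨s.board ++ [p],
        Function.update s.hands s.turn ((s.hands s.turn).erase (Sym2.mk p.1 p.2)),
        s.turn + 1⟩
  | pass (s : GState)
      (hrun : ∀ i, s.hands i ≠ ∅)
      (hb : s.board ≠ [])
      (hcant : ∀ t ∈ s.hands s.turn, ¬ canExtend s.board t) :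
      Step s ⟨s.board, s.hands, s.turn + 1⟩

/-- A four-player partnership domino game: a partition of the 28 domino tiles into
four initial hands of 7 tiles each, together with a legal play sequence of states;
player 1 (index `0`) moves first, and players move cyclically. -/
structure Game where
  initHands : Fin 4 → Finset Tile
  card_initHands : ∀ i, (initHands i).card = 7
  disj_initHands : ∀ i j, i ≠ j → Disjoint (initHands i) (initHands j)
  cover_initHands : ∀ t : Tile, ∃ i, t ∈ initHands i
  states : List GState
  states_ne : states ≠ []
  head_states : states.head states_ne = ⟨[], initHands, 0⟩
  chain_states : states.Chain' Step

/-- The final position of a game. -/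
def Game.finalState (g : Game) : GState := g.states.getLast g.states_ne

/-- A position is blocked if at least one tile has been played and no player's
remaining hand contains a tile containing either open end of the chain. -/
def IsBlocked (s : GState) : Prop :=
  s.board ≠ [] ∧ ∀ i : Fin 4, ∀ t ∈ s.hands i, ¬ canExtend s.board t

/-- A game ends blocked if its final position is blocked. -/
def Game.EndsBlocked (g : Game) : Prop := IsBlocked g.finalState

/-- Team `tm` plays at least one tile during the game: at some turn the player to move
belongs to team `tm` and the board changes (a tile is placed). -/
def Game.teamPlays (g : Game) (tm : Bool) : Prop :=
  ∃ (i : ℕ) (h : i + 1 < g.states.length),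
    playerTeam ((g.states.get ⟨i, by omega⟩).turn) = tm ∧
    (g.states.get ⟨i + 1, h⟩).board ≠ (g.states.get ⟨i, by omega⟩).board

/-- There exists a four-player partnership domino game ending blocked in which the
winning team (the team whose remaining hands have strictly smaller total pip sum)
scores exactly 107 points, the score being the total pip sum remaining in the
opposing team's hands. -/
instance (b : Board) (t : Tile) : Decidable (canExtend b t) := by
  unfold canExtend; infer_instance

instance (s : GState) : Decidable (IsBlocked s) := by
  unfold IsBlocked; infer_instance

def dH0 : Finset Tile := {Sym2.mk (0:Fin 7) (0:Fin 7), Sym2.mk (0:Fin 7) (1:Fin 7), Sym2.mk (0:Fin 7) (3:Fin 7), Sym2.mk (0:Fin 7) (5:Fin 7), Sym2.mk (1:Fin 7) (1:Fin 7), Sym2.mk (2:Fin 7) (3:Fin 7), Sym2.mk (2:Fin 7) (4:Fin 7)}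
def dH1 : Finset Tile := {Sym2.mk (1:Fin 7) (5:Fin 7), Sym2.mk (1:Fin 7) (6:Fin 7), Sym2.mk (2:Fin 7) (5:Fin 7), Sym2.mk (2:Fin 7) (6:Fin 7), Sym2.mk (5:Fin 7) (5:Fin 7), Sym2.mk (5:Fin 7) (6:Fin 7), Sym2.mk (6:Fin 7) (6:Fin 7)}
def dH2 : Finset Tile := {Sym2.mk (0:Fin 7) (2:Fin 7), Sym2.mk (0:Fin 7) (4:Fin 7), Sym2.mk (0:Fin 7) (6:Fin 7), Sym2.mk (1:Fin 7) (2:Fin 7), Sym2.mk (1:Fin 7) (3:Fin 7), Sym2.mk (1:Fin 7) (4:Fin 7), Sym2.mk (2:Fin 7) (2:Fin 7)}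
def dH3 : Finset Tile := {Sym2.mk (3:Fin 7) (3:Fin 7), Sym2.mk (3:Fin 7) (4:Fin 7), Sym2.mk (3:Fin 7) (5:Fin 7), Sym2.mk (3:Fin 7) (6:Fin 7), Sym2.mk (4:Fin 7) (4:Fin 7), Sym2.mk (4:Fin 7) (5:Fin 7), Sym2.mk (4:Fin 7) (6:Fin 7)}
def dh0 : Fin 4 → Finset Tile := ![dH0, dH1, dH2, dH3]
def dh1 : Fin 4 → Finset Tile := Function.update dh0 0 ((dh0 0).erase (Sym2.mk (0:Fin 7) (5:Fin 7)))
def dh2 : Fin 4 → Finset Tile := Function.update dh1 1 ((dh1 1).erase (Sym2.mk (5:Fin 7) (6:Fin 7)))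
def dh3 : Fin 4 → Finset Tile := Function.update dh2 2 ((dh2 2).erase (Sym2.mk (6:Fin 7) (0:Fin 7)))
def dh4 : Fin 4 → Finset Tile := Function.update dh3 0 ((dh3 0).erase (Sym2.mk (0:Fin 7) (3:Fin 7)))
def dh5 : Fin 4 → Finset Tile := Function.update dh4 2 ((dh4 2).erase (Sym2.mk (3:Fin 7) (1:Fin 7)))
def dh6 : Fin 4 → Finset Tile := Function.update dh5 0 ((dh5 0).erase (Sym2.mk (1:Fin 7) (0:Fin 7)))
def dh7 : Fin 4 → Finset Tile := Function.update dh6 2 ((dh6 2).erase (Sym2.mk (0:Fin 7) (2:Fin 7)))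
def dh8 : Fin 4 → Finset Tile := Function.update dh7 0 ((dh7 0).erase (Sym2.mk (2:Fin 7) (4:Fin 7)))
def dh9 : Fin 4 → Finset Tile := Function.update dh8 2 ((dh8 2).erase (Sym2.mk (4:Fin 7) (0:Fin 7)))
def dh10 : Fin 4 → Finset Tile := Function.update dh9 0 ((dh9 0).erase (Sym2.mk (0:Fin 7) (0:Fin 7)))
def ds0 : GState := ⟨[], dh0, 0⟩
def ds1 : GState := ⟨[((0:Fin 7),(5:Fin 7))], dh1, 1⟩
def ds2 : GState := ⟨[((0:Fin 7),(5:Fin 7)), ((5:Fin 7),(6:Fin 7))], dh2, 2⟩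
def ds3 : GState := ⟨[((0:Fin 7),(5:Fin 7)), ((5:Fin 7),(6:Fin 7)), ((6:Fin 7),(0:Fin 7))], dh3, 3⟩
def ds4 : GState := ⟨[((0:Fin 7),(5:Fin 7)), ((5:Fin 7),(6:Fin 7)), ((6:Fin 7),(0:Fin 7))], dh3, 0⟩
def ds5 : GState := ⟨[((0:Fin 7),(5:Fin 7)), ((5:Fin 7),(6:Fin 7)), ((6:Fin 7),(0:Fin 7)), ((0:Fin 7),(3:Fin 7))], dh4, 1⟩
def ds6 : GState := ⟨[((0:Fin 7),(5:Fin 7)), ((5:Fin 7),(6:Fin 7)), ((6:Fin 7),(0:Fin 7)), ((0:Fin 7),(3:Fin 7))], dh4, 2⟩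
def ds7 : GState := ⟨[((0:Fin 7),(5:Fin 7)), ((5:Fin 7),(6:Fin 7)), ((6:Fin 7),(0:Fin 7)), ((0:Fin 7),(3:Fin 7)), ((3:Fin 7),(1:Fin 7))], dh5, 3⟩
def ds8 : GState := ⟨[((0:Fin 7),(5:Fin 7)), ((5:Fin 7),(6:Fin 7)), ((6:Fin 7),(0:Fin 7)), ((0:Fin 7),(3:Fin 7)), ((3:Fin 7),(1:Fin 7))], dh5, 0⟩
def ds9 : GState := ⟨[((0:Fin 7),(5:Fin 7)), ((5:Fin 7),(6:Fin 7)), ((6:Fin 7),(0:Fin 7)), ((0:Fin 7),(3:Fin 7)), ((3:Fin 7),(1:Fin 7)), ((1:Fin 7),(0:Fin 7))], dh6, 1⟩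
def ds10 : GState := ⟨[((0:Fin 7),(5:Fin 7)), ((5:Fin 7),(6:Fin 7)), ((6:Fin 7),(0:Fin 7)), ((0:Fin 7),(3:Fin 7)), ((3:Fin 7),(1:Fin 7)), ((1:Fin 7),(0:Fin 7))], dh6, 2⟩
def ds11 : GState := ⟨[((0:Fin 7),(5:Fin 7)), ((5:Fin 7),(6:Fin 7)), ((6:Fin 7),(0:Fin 7)), ((0:Fin 7),(3:Fin 7)), ((3:Fin 7),(1:Fin 7)), ((1:Fin 7),(0:Fin 7)), ((0:Fin 7),(2:Fin 7))], dh7, 3⟩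
def ds12 : GState := ⟨[((0:Fin 7),(5:Fin 7)), ((5:Fin 7),(6:Fin 7)), ((6:Fin 7),(0:Fin 7)), ((0:Fin 7),(3:Fin 7)), ((3:Fin 7),(1:Fin 7)), ((1:Fin 7),(0:Fin 7)), ((0:Fin 7),(2:Fin 7))], dh7, 0⟩
def ds13 : GState := ⟨[((0:Fin 7),(5:Fin 7)), ((5:Fin 7),(6:Fin 7)), ((6:Fin 7),(0:Fin 7)), ((0:Fin 7),(3:Fin 7)), ((3:Fin 7),(1:Fin 7)), ((1:Fin 7),(0:Fin 7)), ((0:Fin 7),(2:Fin 7)), ((2:Fin 7),(4:Fin 7))], dh8, 1⟩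
def ds14 : GState := ⟨[((0:Fin 7),(5:Fin 7)), ((5:Fin 7),(6:Fin 7)), ((6:Fin 7),(0:Fin 7)), ((0:Fin 7),(3:Fin 7)), ((3:Fin 7),(1:Fin 7)), ((1:Fin 7),(0:Fin 7)), ((0:Fin 7),(2:Fin 7)), ((2:Fin 7),(4:Fin 7))], dh8, 2⟩
def ds15 : GState := ⟨[((0:Fin 7),(5:Fin 7)), ((5:Fin 7),(6:Fin 7)), ((6:Fin 7),(0:Fin 7)), ((0:Fin 7),(3:Fin 7)), ((3:Fin 7),(1:Fin 7)), ((1:Fin 7),(0:Fin 7)), ((0:Fin 7),(2:Fin 7)), ((2:Fin 7),(4:Fin 7)), ((4:Fin 7),(0:Fin 7))], dh9, 3⟩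
def ds16 : GState := ⟨[((0:Fin 7),(5:Fin 7)), ((5:Fin 7),(6:Fin 7)), ((6:Fin 7),(0:Fin 7)), ((0:Fin 7),(3:Fin 7)), ((3:Fin 7),(1:Fin 7)), ((1:Fin 7),(0:Fin 7)), ((0:Fin 7),(2:Fin 7)), ((2:Fin 7),(4:Fin 7)), ((4:Fin 7),(0:Fin 7))], dh9, 0⟩
def ds17 : GState := ⟨[((0:Fin 7),(5:Fin 7)), ((5:Fin 7),(6:Fin 7)), ((6:Fin 7),(0:Fin 7)), ((0:Fin 7),(3:Fin 7)), ((3:Fin 7),(1:Fin 7)), ((1:Fin 7),(0:Fin 7)), ((0:Fin 7),(2:Fin 7)), ((2:Fin 7),(4:Fin 7)), ((4:Fin 7),(0:Fin 7)), ((0:Fin 7),(0:Fin 7))], dh10, 1⟩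
def dstates : List GState := [ds0, ds1, ds2, ds3, ds4, ds5, ds6, ds7, ds8, ds9, ds10, ds11, ds12, ds13, ds14, ds15, ds16, ds17]
def dgame : Game where
  initHands := dh0
  card_initHands := by decide
  disj_initHands := by
    intro i j hij
    rw [Finset.disjoint_left]
    revert hij
    revert i j
    decide
  cover_initHands := by decide
  states := dstates
  states_ne := by simp [dstates]
  head_states := rfl
  chain_states := by
    simp only [List.Chain', dstates, List.isChain_cons_cons, List.isChain_singleton, and_true]
    refine ⟨?_, ?_, ?_, ?_, ?_, ?_, ?_, ?_, ?_, ?_, ?_, ?_, ?_, ?_, ?_, ?_, ?_⟩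
    · exact Step.playFirst ds0 ((0:Fin 7),(5:Fin 7)) (by decide) rfl (by decide)
    · exact Step.playRight ds1 ((5:Fin 7),(6:Fin 7)) (by decide) (by decide) (by decide) (by decide)
    · exact Step.playRight ds2 ((6:Fin 7),(0:Fin 7)) (by decide) (by decide) (by decide) (by decide)
    · exact Step.pass ds3 (by decide) (by decide) (by decide)
    · exact Step.playRight ds4 ((0:Fin 7),(3:Fin 7)) (by decide) (by decide) (by decide) (by decide)
    · exact Step.pass ds5 (by decide) (by decide) (by decide)
    · exact Step.playRight ds6 ((3:Fin 7),(1:Fin 7)) (by decide) (by decide) (by decide) (by decide)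
    · exact Step.pass ds7 (by decide) (by decide) (by decide)
    · exact Step.playRight ds8 ((1:Fin 7),(0:Fin 7)) (by decide) (by decide) (by decide) (by decide)
    · exact Step.pass ds9 (by decide) (by decide) (by decide)
    · exact Step.playRight ds10 ((0:Fin 7),(2:Fin 7)) (by decide) (by decide) (by decide) (by decide)
    · exact Step.pass ds11 (by decide) (by decide) (by decide)
    · exact Step.playRight ds12 ((2:Fin 7),(4:Fin 7)) (by decide) (by decide) (by decide) (by decide)
    · exact Step.pass ds13 (by decide) (by decide) (by decide)
    · exact Step.playRight ds14 ((4:Fin 7),(0:Fin 7)) (by decide) (by decide) (by decide) (by decide)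
    · exact Step.pass ds15 (by decide) (by decide) (by decide)
    · exact Step.playRight ds16 ((0:Fin 7),(0:Fin 7)) (by decide) (by decide) (by decide) (by decide)


theorem exists_blocked_game_score_107 :
    ∃ (g : Game) (tm : Bool),
      g.EndsBlocked ∧
      g.finalState.teamPips tm < g.finalState.teamPips (!tm) ∧
      g.finalState.teamPips (!tm) = 107 := by
  refine ⟨dgame, false, ?_, ?_, ?_⟩
  · exact (by decide : IsBlocked ds17)
  · exact (by decide : ds17.teamPips false < ds17.teamPips true)
  · exact (by decide : ds17.teamPips true = 107)
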